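/- arXiv:math/0404400 — 2 statements merged into one kernel-verified Lean document; each statement's English description precedes it below -/
import Mathlib

section
/- Let k be a positive integer and let x be an element of the algebraic closure of Q_p with x^{p^k} = x. Then the formal identity E(t)^{x + x^p + ⋯ + x^{p^{k-1}}} = E(tx)·E(tx^p)⋯E(tx^{p^{k-1}}) holds, where E is the Artin-Hasse exponential and the left side is defined via exp of the scalar multiple of log E. -/
noncomputable def expOf {R : Type*} [CommRing R] [Algebra ℚ R] (f : PowerSeries R) :
    PowerSeries R :=
  PowerSeries.mk fun n => ∑ k ∈ Finset.range (n + 1),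
    algebraMap ℚ R (1 / (k.factorial : ℚ)) * PowerSeries.coeff (R := R) n (f ^ k)

open scoped Classical in
/-- The logarithm of the Artin–Hasse series: `∑_{i≥0} t^{p^i}/p^i`. -/
noncomputable def AHlog (p : ℕ) (R : Type*) [CommRing R] [Algebra ℚ R] : PowerSeries R :=
  PowerSeries.mk fun n =>
    if h : ∃ i : ℕ, n = p ^ i then algebraMap ℚ R (((p : ℚ) ^ h.choose)⁻¹) else 0

/-- The Artin–Hasse exponential series `E(t) = exp(∑_{i≥0} t^{p^i}/p^i)`. -/
noncomputable def AH (p : ℕ) (R : Type*) [CommRing R] [Algebra ℚ R] : PowerSeries R :=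
  expOf (AHlog p R)

/-- `ord_p`, the `p`-adic valuation attached to the norm, normalized by `ordp p p = 1`. -/
noncomputable def ordp (p : ℕ) {K : Type*} [NormedField K] (x : K) : ℝ :=
  -Real.logb p ‖x‖

/-- Evaluation of the Artin–Hasse series at an element of a normed `ℚ_p`-algebra. -/
noncomputable def AHeval (p : ℕ) [Fact p.Prime] {K : Type*} [NormedField K]
    [Algebra ℚ_[p] K] (x : K) : K :=
  ∑' n : ℕ, algebraMap ℚ_[p] K (PowerSeries.coeff (R := ℚ_[p]) n (AH p ℚ_[p])) * x ^ n

section AuxAH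
open PowerSeries Finset
variable {R : Type*} [CommRing R] [Algebra ℚ R]

lemma coeff_expOf (f : R⟦X⟧) (n : ℕ) :
    coeff n (expOf f) = ∑ k ∈ range (n + 1),
      algebraMap ℚ R (1 / (k.factorial : ℚ)) * coeff n (f ^ k) := by
  simp [expOf]

lemma coeff_pow_zero_of_lt {f : R⟦X⟧} (hf : constantCoeff f = 0) {n k : ℕ} (h : n < k) :
    coeff n (f ^ k) = 0 := by
  have : (X : R⟦X⟧) ^ k ∣ f ^ k := pow_dvd_pow_of_dvd (X_dvd_iff.mpr hf) k
  exact (X_pow_dvd_iff.mp this) n h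

lemma coeff_expOf_ext (f : R⟦X⟧) (hf : constantCoeff f = 0) {n N : ℕ} (h : n ≤ N) :
    coeff n (expOf f) = ∑ k ∈ range (N + 1),
      algebraMap ℚ R (1 / (k.factorial : ℚ)) * coeff n (f ^ k) := by
  rw [coeff_expOf]
  apply Finset.sum_subset (by intro a ha; simp at *; omega)
  intro a _ ha
  simp only [mem_range, not_lt] at ha
  rw [coeff_pow_zero_of_lt hf (by omega), mul_zero]

lemma coeff_mul_pow_zero {f g : R⟦X⟧} (hf : constantCoeff f = 0)
    (hg : constantCoeff g = 0) {n a b : ℕ} (h : n < a + b) :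
    coeff n (f ^ a * g ^ b) = 0 := by
  have : (X : R⟦X⟧) ^ (a + b) ∣ f ^ a * g ^ b := by
    rw [pow_add]
    exact mul_dvd_mul (pow_dvd_pow_of_dvd (X_dvd_iff.mpr hf) a)
      (pow_dvd_pow_of_dvd (X_dvd_iff.mpr hg) b)
  exact (X_pow_dvd_iff.mp this) n h

lemma factorial_alg (a b : ℕ) :
    algebraMap ℚ R (1 / ((a + b).factorial : ℚ)) * (((a + b).choose a : R))
      = algebraMap ℚ R (1 / (a.factorial : ℚ)) * algebraMap ℚ R (1 / (b.factorial : ℚ)) := by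
  have h : ((a + b).choose a : R) = algebraMap ℚ R ((a + b).choose a : ℚ) := by
    simp
  rw [h, ← map_mul, ← map_mul]
  congr 1
  have hfac : ((a + b).choose a * a.factorial * b.factorial : ℚ) = ((a + b).factorial : ℚ) := by
    have h0 := Nat.choose_mul_factorial_mul_factorial (Nat.le_add_right a b)
    rw [Nat.add_sub_cancel_left] at h0
    exact_mod_cast congrArg (Nat.cast : ℕ → ℚ) h0
  have ha : (a.factorial : ℚ) ≠ 0 := Nat.cast_ne_zero.mpr a.factorial_ne_zero
  have hb : (b.factorial : ℚ) ≠ 0 := Nat.cast_ne_zero.mpr b.factorial_ne_zero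
  have hab : ((a + b).factorial : ℚ) ≠ 0 := Nat.cast_ne_zero.mpr (a + b).factorial_ne_zero
  field_simp
  linarith [hfac]

lemma expOf_add (f g : R⟦X⟧) (hf : constantCoeff f = 0) (hg : constantCoeff g = 0) :
    expOf (f + g) = expOf f * expOf g := by
  ext n
  have key : coeff n (expOf f * expOf g)
      = ∑ a ∈ range (n+1), ∑ b ∈ range (n+1),
          algebraMap ℚ R (1 / a.factorial) * algebraMap ℚ R (1 / b.factorial)
            * coeff n (f ^ a * g ^ b) := by
    rw [PowerSeries.coeff_mul]
    have step1 : ∀ ij ∈ antidiagonal n, coeff ij.1 (expOf f) * coeff ij.2 (expOf g)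
        = ∑ a ∈ range (n+1), ∑ b ∈ range (n+1),
            (algebraMap ℚ R (1 / a.factorial) * coeff ij.1 (f ^ a))
              * (algebraMap ℚ R (1 / b.factorial) * coeff ij.2 (g ^ b)) := by
      intro ij hij
      rw [HasAntidiagonal.mem_antidiagonal] at hij
      rw [coeff_expOf_ext f hf (show ij.1 ≤ n by omega),
          coeff_expOf_ext g hg (show ij.2 ≤ n by omega), Finset.sum_mul_sum]
    rw [Finset.sum_congr rfl step1, Finset.sum_comm]
    refine Finset.sum_congr rfl fun a _ => ?_
    rw [Finset.sum_comm]
    refine Finset.sum_congr rfl fun b _ => ?_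
    rw [PowerSeries.coeff_mul, Finset.mul_sum]
    refine Finset.sum_congr rfl fun ij _ => ?_
    ring
  rw [key, coeff_expOf]
  -- expand (f+g)^k
  have expand : ∀ k, coeff n ((f + g) ^ k)
      = ∑ a ∈ range (k + 1), coeff n (f ^ a * g ^ (k - a)) * ((k.choose a : R)) := by
    intro k
    rw [add_pow, map_sum]
    refine Finset.sum_congr rfl fun a _ => ?_
    have : ((k.choose a : ℕ) : R⟦X⟧) = PowerSeries.C ((k.choose a : ℕ) : R) := by
      simp
    rw [this, PowerSeries.coeff_mul_C]
  simp_rw [expand, Finset.mul_sum]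
  -- reindex double sum on the left as a sigma sum
  rw [Finset.sum_sigma']
  -- restrict the right square sum to a + b ≤ n
  have hsq : ∑ a ∈ range (n+1), ∑ b ∈ range (n+1),
        algebraMap ℚ R (1 / a.factorial) * algebraMap ℚ R (1 / b.factorial)
          * coeff n (f ^ a * g ^ b)
      = ∑ ab ∈ (range (n+1) ×ˢ range (n+1)).filter (fun ab => ab.1 + ab.2 ≤ n),
          algebraMap ℚ R (1 / ab.1.factorial) * algebraMap ℚ R (1 / ab.2.factorial)
            * coeff n (f ^ ab.1 * g ^ ab.2) := by
    rw [← Finset.sum_product']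
    refine (Finset.sum_subset (Finset.filter_subset _ _) ?_).symm
    intro ab hab hnab
    rw [Finset.mem_filter] at hnab
    have hgt : n < ab.1 + ab.2 := by
      by_contra hle
      push_neg at hle
      exact hnab ⟨hab, hle⟩
    rw [coeff_mul_pow_zero hf hg hgt, mul_zero]
  rw [hsq]
  refine Finset.sum_nbij' (fun ka => (ka.2, ka.1 - ka.2)) (fun ab => ⟨ab.1 + ab.2, ab.1⟩)
    ?_ ?_ ?_ ?_ ?_
  · rintro ⟨k, a⟩ h
    simp only [Finset.mem_sigma, Finset.mem_range] at h
    simp only [Finset.mem_filter, Finset.mem_product, Finset.mem_range]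
    omega
  · rintro ⟨a, b⟩ h
    simp only [Finset.mem_filter, Finset.mem_product, Finset.mem_range] at h
    simp only [Finset.mem_sigma, Finset.mem_range]
    omega
  · rintro ⟨k, a⟩ h
    simp only [Finset.mem_sigma, Finset.mem_range] at h
    have hk : a + (k - a) = k := by omega
    show (⟨a + (k - a), a⟩ : (_ : ℕ) × ℕ) = ⟨k, a⟩
    rw [hk]
  · rintro ⟨a, b⟩ h
    simp only [Finset.mem_filter, Finset.mem_product, Finset.mem_range] at h
    dsimp only
    have hb : a + b - a = b := by omega
    simp [hb]
  · rintro ⟨k, a⟩ h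
    simp only [Finset.mem_sigma, Finset.mem_range] at h
    have hak : a ≤ k := by omega
    have hsplit : a + (k - a) = k := by omega
    dsimp only
    calc algebraMap ℚ R (1 / k.factorial) * (coeff n (f ^ a * g ^ (k - a)) * (k.choose a : R))
        = (algebraMap ℚ R (1 / k.factorial) * (k.choose a : R))
            * coeff n (f ^ a * g ^ (k - a)) := by ring
      _ = algebraMap ℚ R (1 / a.factorial) * algebraMap ℚ R (1 / (k - a).factorial)
            * coeff n (f ^ a * g ^ (k - a)) := by
          congr 1
          have := factorial_alg (R := R) a (k - a)
          rw [hsplit] at this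
          rw [← this]

lemma expOf_zero : expOf (0 : R⟦X⟧) = 1 := by
  ext n
  rw [coeff_expOf]
  rcases Nat.eq_zero_or_pos n with rfl | hn
  · simp
  · rw [PowerSeries.coeff_one, if_neg (by omega)]
    apply Finset.sum_eq_zero
    intro k _
    rcases Nat.eq_zero_or_pos k with rfl | hkpos
    · rw [pow_zero, PowerSeries.coeff_one, if_neg (by omega), mul_zero]
    · rw [zero_pow (by omega), map_zero, mul_zero]

lemma rescale_expOf (a : R) (f : R⟦X⟧) :
    PowerSeries.rescale a (expOf f) = expOf (PowerSeries.rescale a f) := by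
  ext n
  rw [coeff_rescale, coeff_expOf, coeff_expOf, Finset.mul_sum]
  refine Finset.sum_congr rfl fun k _ => ?_
  rw [← map_pow, coeff_rescale]
  ring

lemma constantCoeff_rescale_zero (a : R) (f : R⟦X⟧) (hf : constantCoeff f = 0) :
    constantCoeff (PowerSeries.rescale a f) = 0 := by
  rw [← PowerSeries.coeff_zero_eq_constantCoeff, coeff_rescale, pow_zero, one_mul,
    PowerSeries.coeff_zero_eq_constantCoeff, hf]

lemma expOf_sum (s : Finset ℕ) (F : ℕ → R⟦X⟧) :
    (∀ j ∈ s, constantCoeff (F j) = 0) →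
      expOf (∑ j ∈ s, F j) = ∏ j ∈ s, expOf (F j) := by
  classical
  induction s using Finset.induction_on with
  | empty => intro _; simp [expOf_zero]
  | @insert a s' ha ih =>
    intro hF
    rw [Finset.sum_insert ha, Finset.prod_insert ha,
      expOf_add _ _ (hF a (Finset.mem_insert_self a s'))
        (by rw [map_sum]; exact Finset.sum_eq_zero fun j hjs =>
          hF j (Finset.mem_insert_of_mem hjs)),
      ih fun j hjs => hF j (Finset.mem_insert_of_mem hjs)]

lemma shift_sum (g : ℕ → R) (k : ℕ) (hg : g k = g 0) :
    ∑ j ∈ range k, g (j + 1) = ∑ j ∈ range k, g j := by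
  have h1 := Finset.sum_range_succ' g k
  have h2 := Finset.sum_range_succ g k
  have h3 := h1.symm.trans h2
  rw [hg] at h3
  exact add_right_cancel h3

lemma cyclic_pow_sum (x : R) (p k : ℕ) (hx : x ^ p ^ k = x) (i : ℕ) :
    ∑ j ∈ range k, x ^ p ^ (j + i) = ∑ j ∈ range k, x ^ p ^ j := by
  induction i with
  | zero => simp
  | succ i ih =>
    have hshift : ∑ j ∈ range k, x ^ p ^ ((j + 1) + i) = ∑ j ∈ range k, x ^ p ^ (j + i) := by
      apply shift_sum (fun j => x ^ p ^ (j + i))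
      show x ^ p ^ (k + i) = x ^ p ^ (0 + i)
      rw [zero_add, pow_add, pow_mul, hx]
    calc ∑ j ∈ range k, x ^ p ^ (j + (i + 1))
        = ∑ j ∈ range k, x ^ p ^ ((j + 1) + i) := by
          refine Finset.sum_congr rfl fun j _ => ?_
          congr 2
          omega
      _ = ∑ j ∈ range k, x ^ p ^ (j + i) := hshift
      _ = _ := ih

lemma constantCoeff_AHlog (p : ℕ) (hp : p ≠ 0) : constantCoeff (AHlog p R) = 0 := by
  rw [← PowerSeries.coeff_zero_eq_constantCoeff, AHlog, coeff_mk, dif_neg]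
  rintro ⟨i, hi⟩
  exact (pow_ne_zero i hp) hi.symm

lemma smul_AHlog (p k : ℕ) (x : R) (hx : x ^ p ^ k = x) :
    ((∑ j ∈ range k, x ^ p ^ j) • AHlog p R)
      = ∑ j ∈ range k, PowerSeries.rescale (x ^ p ^ j) (AHlog p R) := by
  ext n
  rw [PowerSeries.coeff_smul, map_sum, smul_eq_mul]
  simp_rw [coeff_rescale]
  rw [← Finset.sum_mul]
  by_cases h : ∃ i : ℕ, n = p ^ i
  · obtain ⟨i, rfl⟩ := h
    have hkey : ∑ j ∈ range k, (x ^ p ^ j) ^ p ^ i = ∑ j ∈ range k, x ^ p ^ j := by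
      calc ∑ j ∈ range k, (x ^ p ^ j) ^ p ^ i
          = ∑ j ∈ range k, x ^ p ^ (j + i) := by
            refine Finset.sum_congr rfl fun j _ => ?_
            rw [← pow_mul, ← pow_add]
        _ = _ := cyclic_pow_sum x p k hx i
    rw [hkey]
  · have hzero : coeff n (AHlog p R) = 0 := by
      rw [AHlog, coeff_mk, dif_neg h]
    rw [hzero, mul_zero, mul_zero]

end AuxAH

/-- Formal identity: if `x^{p^k} = x`, then
`E(t)^{x+x^p+⋯+x^{p^{k-1}}} = E(tx)·E(tx^p)⋯E(tx^{p^{k-1}})`, where the left-hand side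
is `exp` of the scalar multiple of `log E(t) = ∑_{i≥0} t^{p^i}/p^i`. -/
theorem artin_hasse_pow_trace_formal (p : ℕ) [Fact p.Prime] (k : ℕ) (hk : 1 ≤ k)
    (R : Type*) [CommRing R] [Algebra ℚ R] (x : R) (hx : x ^ p ^ k = x) :
    expOf ((∑ j ∈ Finset.range k, x ^ p ^ j) • AHlog p R)
      = ∏ j ∈ Finset.range k, PowerSeries.rescale (x ^ p ^ j) (AH p R) := by
  have hp : p ≠ 0 := (Fact.out : p.Prime).pos.ne'
  have hL : PowerSeries.constantCoeff (AHlog p R) = 0 := constantCoeff_AHlog p hp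
  rw [smul_AHlog p k x hx,
    expOf_sum _ _ (fun j _ => constantCoeff_rescale_zero _ _ hL)]
  exact Finset.prod_congr rfl fun j _ => by rw [AH, rescale_expOf]
end

section
/- Let π be an element of the algebraic closure of Q_p with ord_p(π) = 1/(p^{m-i-1}(p-1)), a root of ∑_{l≥0} t^{p^l}/p^l = 0, and set γ_j = ∑_{l=0}^{j} π^{p^l}/p^l. If j ≥ m−i, then ord_p(p^j γ_j) ≥ p^{j+1}/(p^{m-i-1}(p-1)) − 1. In particular, ord_p(p^j γ_j) − 1/(p-1) ≥ p^{j-(m-i)+1} − 1. -/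
lemma my_charZero (p : ℕ) (hp : p.Prime) (K : Type*) [NormedField K]
    (hpK : ‖(p : K)‖ = (p : ℝ)⁻¹) : CharZero K := by
  have hppos : (0:ℝ) < (p:ℝ)⁻¹ := by
    have : (0:ℝ) < (p:ℝ) := by exact_mod_cast hp.pos
    positivity
  obtain ⟨q, hq⟩ := CharP.exists K
  rcases CharP.char_is_prime_or_zero K q with hqp | rfl
  · exfalso
    haveI : Fact q.Prime := ⟨hqp⟩
    by_cases hqp' : q = p
    · subst hqp'
      have h0 : (q : K) = 0 := CharP.cast_eq_zero K q
      rw [h0, norm_zero] at hpK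
      exact absurd hpK.symm (ne_of_gt hppos)
    · have hx : ((p : ZMod q)) ≠ 0 := by
        rw [Ne, ZMod.natCast_eq_zero_iff]
        intro hdvd
        exact hqp' ((Nat.prime_dvd_prime_iff_eq hqp hp).mp hdvd)
      have hpow : ((p : ZMod q)) ^ (q - 1) = 1 := ZMod.pow_card_sub_one_eq_one hx
      have hK : ((p : K)) ^ (q - 1) = 1 := by
        have := congrArg (ZMod.castHom (dvd_refl q) K) hpow
        simpa [map_pow, map_natCast] using this
      have hn : ‖(p:K)‖ ^ (q-1) = 1 := by
        rw [← norm_pow, hK, norm_one]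
      rw [hpK] at hn
      have h1 : (p:ℝ)⁻¹ < 1 := by
        rw [inv_lt_one_iff₀]; right; exact_mod_cast hp.one_lt
      have hlt : (p:ℝ)⁻¹ ^ (q-1) < 1 :=
        pow_lt_one₀ hppos.le h1 (by have := hqp.two_le; omega)
      rw [hn] at hlt; exact lt_irrefl 1 hlt
  · exact CharP.charP_to_charZero K

lemma my_ultra (p : ℕ) (hp : p.Prime) (K : Type*) [NormedField K]
    (hpK : ‖(p : K)‖ = (p : ℝ)⁻¹) : IsUltrametricDist K := by
  haveI := my_charZero p hp K hpK
  set f : MulRingNorm ℚ :=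
    { toFun := fun q => ‖((q : ℚ) : K)‖
      map_zero' := by simp
      add_le' := fun x y => by push_cast; exact norm_add_le _ _
      neg' := fun x => by push_cast; simp
      map_one' := by simp
      map_mul' := fun x y => by push_cast; simp
      eq_zero_of_map_eq_zero' := fun x hx => by
        simpa using (norm_eq_zero.mp hx) } with hf
  have hfn : ∀ n : ℕ, f n = ‖(n : K)‖ := by
    intro n
    show ‖(((n:ℚ)) : K)‖ = ‖(n : K)‖
    norm_cast
  have hbd : ∀ n : ℕ, f n ≤ 1 := by
    by_contra h
    have hgt : 1 < f p :=
      Rat.AbsoluteValue.one_lt_of_not_bounded (f := MulRingNorm.mulRingNormEquivAbsoluteValue f) h (hp.one_lt)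
    rw [hfn p, hpK] at hgt
    have h1 : (p:ℝ)⁻¹ < 1 := by
      rw [inv_lt_one_iff₀]; right; exact_mod_cast hp.one_lt
    exact absurd (lt_trans hgt h1) (lt_irrefl 1)
  apply IsUltrametricDist.isUltrametricDist_of_forall_norm_natCast_le_one
  intro n
  rw [← hfn n]; exact hbd n

/-- Let `π` be a root of `∑_{l≥0} t^{p^l}/p^l = 0` with `ord_p(π) = 1/(p^{m-i-1}(p-1))` and
`γ_j = ∑_{l=0}^{j} π^{p^l}/p^l`.  If `j ≥ m−i`, then
`ord_p(p^j γ_j) ≥ p^{j+1}/(p^{m-i-1}(p-1)) − 1`; in particular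
`ord_p(p^j γ_j) − 1/(p-1) ≥ p^{j-(m-i)+1} − 1`. -/
theorem ordp_gamma_large_j (p : ℕ) [Fact p.Prime] (m i j : ℕ)
    (him : i + 1 ≤ m) (hj : m - i ≤ j)
    (K : Type*) [NormedField K]
    (hpK : ‖(p : K)‖ = (p : ℝ)⁻¹)
    (π : K)
    (hroot : HasSum (fun l : ℕ => π ^ p ^ l / (p : K) ^ l) 0)
    (hord : ordp p π = ((p : ℝ) ^ (m - i - 1) * ((p : ℝ) - 1))⁻¹) :
    (p : ℝ) ^ (j + 1) / ((p : ℝ) ^ (m - i - 1) * ((p : ℝ) - 1)) - 1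
        ≤ ordp p ((p : K) ^ j * ∑ l ∈ Finset.range (j + 1), π ^ p ^ l / (p : K) ^ l) ∧
    (p : ℝ) ^ (j - (m - i) + 1) - 1
        ≤ ordp p ((p : K) ^ j * ∑ l ∈ Finset.range (j + 1), π ^ p ^ l / (p : K) ^ l)
            - 1 / ((p : ℝ) - 1) := by
  have hp : p.Prime := Fact.out
  haveI : IsUltrametricDist K := my_ultra p hp K hpK
  set P : ℝ := (p : ℝ) with hPdef
  have hP2 : (2:ℝ) ≤ P := by rw [hPdef]; exact_mod_cast hp.two_le
  have hP1 : 1 < P := by linarith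
  have hP0 : 0 < P := by linarith
  have hPm1 : (0:ℝ) < P - 1 := by linarith
  set c : ℝ := (P ^ (m - i - 1) * (P - 1))⁻¹ with hcdef
  have hc0 : 0 < c := by
    rw [hcdef]; positivity
  -- π ≠ 0
  have hπ : π ≠ 0 := by
    intro h
    rw [h] at hord
    simp [ordp, Real.logb] at hord
    exact absurd hord.symm (ne_of_gt hc0)
  have hπn : 0 < ‖π‖ := norm_pos_iff.mpr hπ
  -- ‖π‖ = P ^ (-c)
  have hθ : ‖π‖ = P ^ (-c : ℝ) := by
    have h1 : Real.logb P ‖π‖ = -c := by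
      have : -Real.logb P ‖π‖ = c := hord
      linarith
    rw [← h1, Real.rpow_logb hP0 (by linarith) hπn]
  set a : ℕ → K := fun l => π ^ p ^ l / (p : K) ^ l with hadef
  set E : ℕ → ℝ := fun l => (l : ℝ) - c * P ^ l with hEdef
  -- norm of each term
  have h_a : ∀ l : ℕ, ‖a l‖ = P ^ (E l) := by
    intro l
    have hcast : ((p ^ l : ℕ) : ℝ) = P ^ l := by push_cast; ring
    rw [hadef]
    simp only [norm_div, norm_pow, hθ, hpK]
    rw [← Real.rpow_natCast (P ^ (-c : ℝ)) (p ^ l), ← Real.rpow_mul hP0.le,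
      inv_pow, ← Real.rpow_natCast P l, ← Real.rpow_neg hP0.le, ← Real.rpow_sub hP0]
    rw [hcast]
    congr 1
    simp only [hEdef]
    ring
  -- step inequality
  have hstep : ∀ l : ℕ, m - i ≤ l → E (l + 1) ≤ E l - 1 := by
    intro l hl
    have hkey : c * P ^ l * (P - 1) = P ^ (l - (m - i - 1)) := by
      have hsplit : P ^ l = P ^ (l - (m - i - 1)) * P ^ (m - i - 1) := by
        rw [← pow_add]; congr 1; omega
      rw [hcdef, hsplit]
      field_simp
    have h2 : (2:ℝ) ≤ c * P ^ l * (P - 1) := by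
      rw [hkey]
      calc (2:ℝ) ≤ P := hP2
        _ ≤ P ^ (l - (m - i - 1)) := le_self_pow₀ (by linarith) (by omega)
    simp only [hEdef]
    push_cast
    have : P ^ (l + 1) = P ^ l * P := pow_succ P l
    nlinarith
  -- monotone tail bound
  have hmono : ∀ l : ℕ, j + 2 ≤ l → E l ≤ E (j + 2) := by
    intro l hl
    induction l, hl using Nat.le_induction with
    | base => exact le_refl _
    | succ n hn ih =>
      have := hstep n (by omega)
      linarith
  -- the tail has sum equal to minus the partial sum
  have hT : HasSum (fun n : ℕ => a (n + (j + 2))) (-(∑ l ∈ Finset.range (j + 2), a l)) := by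
    rw [hasSum_nat_add_iff (j + 2)]
    simpa using hroot
  have hTnorm : ‖∑ l ∈ Finset.range (j + 2), a l‖ ≤ P ^ (E (j + 2)) := by
    rw [← norm_neg]
    rw [← hT.tsum_eq]
    apply IsUltrametricDist.norm_tsum_le_of_forall_le_of_nonneg
    · positivity
    · intro n
      rw [h_a]
      rw [Real.rpow_le_rpow_left_iff hP1]
      exact hmono (n + (j + 2)) (by omega)
  -- strict comparison E (j+2) < E (j+1)
  have hEstrict : P ^ (E (j + 2)) < P ^ (E (j + 1)) := by
    rw [Real.rpow_lt_rpow_left_iff hP1]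
    have := hstep (j + 1) (by omega)
    linarith
  -- norm of γ
  set γ : K := ∑ l ∈ Finset.range (j + 1), a l with hγdef
  have hsum2 : ∑ l ∈ Finset.range (j + 2), a l = γ + a (j + 1) := Finset.sum_range_succ a (j+1)
  have hγnorm : ‖γ‖ = P ^ (E (j + 1)) := by
    have hne : ‖∑ l ∈ Finset.range (j + 2), a l‖ ≠ ‖-(a (j + 1))‖ := by
      rw [norm_neg, h_a]
      intro h
      rw [h] at hTnorm
      exact absurd (lt_of_le_of_lt hTnorm hEstrict) (lt_irrefl _)
    have hdecomp : γ = (∑ l ∈ Finset.range (j + 2), a l) + (-(a (j + 1))) := by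
      rw [hsum2]; ring
    rw [hdecomp, IsUltrametricDist.norm_add_eq_max_of_norm_ne_norm hne, norm_neg, h_a]
    exact max_eq_right (le_of_lt (lt_of_le_of_lt hTnorm hEstrict))
  -- compute ordp
  have hnormfull : ‖(p : K) ^ j * γ‖ = P ^ ((1 : ℝ) - c * P ^ (j + 1)) := by
    rw [norm_mul, norm_pow, hpK, hγnorm, inv_pow, ← Real.rpow_natCast P j,
      ← Real.rpow_neg hP0.le, ← Real.rpow_add hP0]
    congr 1
    simp only [hEdef]
    push_cast
    ring
  have hordγ : ordp p ((p : K) ^ j * γ) = c * P ^ (j + 1) - 1 := by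
    rw [ordp, hnormfull]
    rw [show ((p:ℕ):ℝ) = P from rfl]
    rw [Real.logb_rpow hP0 (by linarith)]
    ring
  constructor
  · rw [hordγ]
    have heq : P ^ (j + 1) / (P ^ (m - i - 1) * (P - 1)) = c * P ^ (j + 1) := by
      rw [hcdef, div_eq_mul_inv]; ring
    rw [heq]
  · rw [hordγ]
    have hsplit : P ^ (j + 1) = P ^ (m - i - 1) * P ^ (j - (m - i) + 2) := by
      rw [← pow_add]; congr 1; omega
    have hkey2 : c * P ^ (j + 1) = P ^ (j - (m - i) + 2) / (P - 1) := by
      rw [hcdef, hsplit]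
      field_simp
    rw [hkey2]
    have h1 : P ^ (j - (m - i) + 2) = P ^ (j - (m - i) + 1) * P := by rw [pow_succ]
    have h2 : (1:ℝ) ≤ P ^ (j - (m - i) + 1) := one_le_pow₀ (by linarith)
    have key3 : P ^ (j - (m - i) + 1) * (P - 1) ≤ P ^ (j - (m - i) + 2) - 1 := by nlinarith
    have h3 : P ^ (j - (m - i) + 1) ≤ (P ^ (j - (m - i) + 2) - 1) / (P - 1) :=
      (le_div_iff₀ hPm1).mpr key3
    have heqd : (P ^ (j - (m - i) + 2) - 1) / (P - 1)
        = P ^ (j - (m - i) + 2) / (P - 1) - 1 / (P - 1) := by ring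
    rw [heqd] at h3
    linarith
end
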